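/- If f: ℝ^d → ℝ has a coordinate-wise L-Lipschitz continuous gradient and satisfies the PL inequality with constant μ > 0, then randomized coordinate descent with step size 1/L (choosing coordinate i_k uniformly at random and updating x_{k+1} = x_k − (1/L)∇_{i_k} f(x_k) e_{i_k}) satisfies E[f(x_k) − f*] ≤ (1 − μ/(dL))^k (f(x_0) − f*). -/

import Mathlib

open RealInnerProductSpace

/-- One step of coordinate descent with step size `1/L` on coordinate `i`. -/
noncomputable def cdStep {d : ℕ} (f : EuclideanSpace ℝ (Fin d) → ℝ) (L : ℝ)
    (x : EuclideanSpace ℝ (Fin d)) (i : Fin d) : EuclideanSpace ℝ (Fin d) :=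
  x - (gradient f x i / L) • EuclideanSpace.single i (1 : ℝ)

theorem randomized_coordinate_descent_PL
    {d : ℕ} (hd : 0 < d) (f : EuclideanSpace ℝ (Fin d) → ℝ) (L μ fstar : ℝ)
    (hL : 0 < L) (hμ : 0 < μ)
    (hdiff : Differentiable ℝ f)
    (hlip : ∀ (x : EuclideanSpace ℝ (Fin d)) (i : Fin d) (α : ℝ),
      f (x + α • EuclideanSpace.single i (1 : ℝ)) ≤
        f x + α * gradient f x i + L / 2 * α ^ 2)
    (hmin : ∃ z, f z = fstar ∧ ∀ y, fstar ≤ f y)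
    (hPL : ∀ x, μ * (f x - fstar) ≤ 1 / 2 * ‖gradient f x‖ ^ 2)
    (x0 : EuclideanSpace ℝ (Fin d)) :
    ∀ k : ℕ,
      (∑ ω : Fin k → Fin d, (f (List.foldl (cdStep f L) x0 (List.ofFn ω)) - fstar))
          / (d : ℝ) ^ k
        ≤ (1 - μ / (d * L)) ^ k * (f x0 - fstar) := by
  obtain ⟨z, hz, hlb⟩ := hmin
  have hd' : (0:ℝ) < d := by exact_mod_cast hd
  have hstep : ∀ x i, f (cdStep f L x i) ≤ f x - (gradient f x i)^2/(2*L) := by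
    intro x i
    have h := hlip x i (-(gradient f x i / L))
    have hx : cdStep f L x i = x + (-(gradient f x i / L)) • EuclideanSpace.single i (1:ℝ) := by
      simp [cdStep, sub_eq_add_neg, neg_smul]
    have e : f x + (-(gradient f x i / L)) * gradient f x i + L/2 * (-(gradient f x i / L))^2
        = f x - (gradient f x i)^2/(2*L) := by
      field_simp; ring
    rw [hx]; linarith [h, e.le]
  have hnorm : ∀ x : EuclideanSpace ℝ (Fin d), ‖gradient f x‖^2 = ∑ i, (gradient f x i)^2 := by
    intro x
    rw [EuclideanSpace.norm_eq, Real.sq_sqrt (by positivity)]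
    simp [Real.norm_eq_abs, sq_abs]
  have hsum : ∀ x, ∑ i : Fin d, (f (cdStep f L x i) - fstar)
      ≤ (d:ℝ) * (1 - μ/(d*L)) * (f x - fstar) := by
    intro x
    have h1 : ∑ i : Fin d, (f (cdStep f L x i) - fstar)
        ≤ ∑ i : Fin d, (f x - fstar - (gradient f x i)^2/(2*L)) :=
      Finset.sum_le_sum fun i _ => by have := hstep x i; linarith
    have h2 : ∑ i : Fin d, (f x - fstar - (gradient f x i)^2/(2*L))
        = (d:ℝ) * (f x - fstar) - (∑ i, (gradient f x i)^2)/(2*L) := by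
      rw [Finset.sum_sub_distrib, Finset.sum_const, Finset.card_univ, ← Finset.sum_div]
      simp [mul_comm]
    have hPLx := hPL x
    rw [hnorm x] at hPLx
    have h3 : μ/L*(f x - fstar) ≤ (∑ i, (gradient f x i)^2)/(2*L) := by
      rw [div_mul_eq_mul_div, div_le_div_iff₀ hL (by positivity)]
      nlinarith
    have h4 : (d:ℝ) * (1 - μ/(d*L)) * (f x - fstar)
        = (d:ℝ)*(f x - fstar) - μ/L*(f x - fstar) := by
      field_simp
    linarith
  by_cases hconst : ∀ x, f x = fstar
  · intro k; simp [hconst]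
  · push_neg at hconst
    obtain ⟨y, hy⟩ := hconst
    have hy' : fstar < f y := (hlb y).lt_of_ne (Ne.symm hy)
    have hq : μ ≤ d * L := by
      have h1 : ∀ i, (gradient f y i)^2 ≤ 2*L*(f y - fstar) := fun i => by
        have h := hstep y i
        have h' := hlb (cdStep f L y i)
        have hdiv : gradient f y i ^ 2 / (2*L) ≤ f y - fstar := by linarith
        have := (div_le_iff₀ (show (0:ℝ) < 2*L by positivity)).mp hdiv
        nlinarith
      have h2 : ∑ i : Fin d, (gradient f y i)^2 ≤ (d:ℝ)*(2*L*(f y - fstar)) := by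
        calc ∑ i : Fin d, (gradient f y i)^2 ≤ ∑ _i : Fin d, 2*L*(f y - fstar) :=
              Finset.sum_le_sum fun i _ => h1 i
          _ = (d:ℝ)*(2*L*(f y - fstar)) := by
              rw [Finset.sum_const, Finset.card_univ]; simp [mul_comm]
      have hPLy := hPL y
      rw [hnorm y] at hPLy
      nlinarith
    have hq1 : 0 ≤ 1 - μ/(d*L) := by
      rw [sub_nonneg, div_le_one (by positivity)]; exact hq
    intro k
    induction k generalizing x0 with
    | zero => simp
    | succ k ih =>
      set q : ℝ := 1 - μ/(d*L) with hqdef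
      have hsplit : ∑ ω : Fin (k+1) → Fin d, (f (List.foldl (cdStep f L) x0 (List.ofFn ω)) - fstar)
          = ∑ i : Fin d, ∑ ω : Fin k → Fin d,
              (f (List.foldl (cdStep f L) (cdStep f L x0 i) (List.ofFn ω)) - fstar) := by
        calc ∑ ω : Fin (k+1) → Fin d, (f (List.foldl (cdStep f L) x0 (List.ofFn ω)) - fstar)
            = ∑ p : Fin d × (Fin k → Fin d),
                (f (List.foldl (cdStep f L) (cdStep f L x0 p.1) (List.ofFn p.2)) - fstar) := by
              refine Fintype.sum_equiv (Fin.consEquiv fun _ => Fin d).symm _ _ fun ω => ?_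
              have : List.ofFn ω = ω 0 :: List.ofFn (fun i => ω i.succ) := List.ofFn_succ (f := ω)
              simp only [this, Fin.consEquiv_apply, Equiv.symm_apply_eq, List.foldl_cons]
              rfl
          _ = _ := Fintype.sum_prod_type _
      have h1 : ∀ i : Fin d, ∑ ω : Fin k → Fin d,
            (f (List.foldl (cdStep f L) (cdStep f L x0 i) (List.ofFn ω)) - fstar)
          ≤ (d:ℝ)^k * (q^k * (f (cdStep f L x0 i) - fstar)) := by
        intro i
        have := ih (cdStep f L x0 i)
        rw [div_le_iff₀ (by positivity)] at this
        linarith [this]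
      have h2 : ∑ i : Fin d, ∑ ω : Fin k → Fin d,
            (f (List.foldl (cdStep f L) (cdStep f L x0 i) (List.ofFn ω)) - fstar)
          ≤ (d:ℝ)^k * q^k * ∑ i : Fin d, (f (cdStep f L x0 i) - fstar) := by
        rw [Finset.mul_sum]
        exact Finset.sum_le_sum fun i _ => by have := h1 i; linarith
      have h3 : (d:ℝ)^k * q^k * ∑ i : Fin d, (f (cdStep f L x0 i) - fstar)
          ≤ (d:ℝ)^k * q^k * ((d:ℝ) * q * (f x0 - fstar)) :=
        mul_le_mul_of_nonneg_left (hsum x0)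
          (mul_nonneg (by positivity) (pow_nonneg hq1 k))
      rw [div_le_iff₀ (by positivity)]
      have hring : (d:ℝ)^k * q^k * ((d:ℝ) * q * (f x0 - fstar))
          = q^(k+1) * (f x0 - fstar) * (d:ℝ)^(k+1) := by ring
      linarith [hsplit.le, hsplit.ge, h2, h3, hring.le]
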